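/- (Hilbert-space case of the convergence of stochastic gradient descent with biased gradients.) Let H be a real inner product space, f : H → ℝ a differentiable function with gradient ∇f, and f* ∈ ℝ with f* ≤ f(x) for all x ∈ H. Assume f satisfies the L-descent inequality and is μ-gradient dominated with respect to f*, where 0 < μ ≤ L. Let (Ω, ℱ, P) be a probability space, α ∈ (0, 1/(4L)], x₀ ∈ H, and let (δ_t)_{t≥0} be measurable maps Ω → H with E[‖δ_t‖²] ≤ ε_t for each t, where each ‖δ_t‖² is integrable. Define random points x_{t+1}(ω) = x_t(ω) − α·(∇f(x_t(ω)) + δ_t(ω)) for t ≥ 0, and assume each f(x_t) − f* is integrable. Then for every t ≥ 1, with ρ = 1 − αμ/2, E[f(x_t)] − f* ≤ ρ^t·(f(x₀) − f*) + α·Σ_{ℓ=0}^{t−1} ρ^{t−1−ℓ}·ε_ℓ. Moreover, if ε_t → 0 as t → ∞, then E[f(x_t)] − f* → 0. -/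

import Mathlib

open scoped RealInnerProductSpace
open MeasureTheory

open Filter in
private lemma geom_conv_tendsto_aux {ρ : ℝ} (h0 : 0 ≤ ρ) (h1 : ρ < 1) {ε : ℕ → ℝ}
    (hε : ∀ n, 0 ≤ ε n)
    (hlim : Tendsto ε atTop (nhds 0)) :
    Tendsto (fun t => ∑ ℓ ∈ Finset.range t, ρ ^ (t - 1 - ℓ) * ε ℓ) atTop (nhds 0) := by
  have h1ρ : 0 < 1 - ρ := by linarith
  rw [Metric.tendsto_atTop] at hlim ⊢
  intro η hη
  obtain ⟨N, hN⟩ := hlim (η * (1 - ρ) / 2) (by positivity)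
  have hNε : ∀ ℓ, N ≤ ℓ → ε ℓ ≤ η * (1 - ρ) / 2 := fun ℓ hℓ => by
    have := hN ℓ hℓ
    rw [Real.dist_eq, sub_zero, abs_of_nonneg (hε ℓ)] at this
    linarith
  set B := ∑ ℓ ∈ Finset.range N, ε ℓ with hBdef
  have hpow : Tendsto (fun k : ℕ => ρ ^ k * B) atTop (nhds 0) := by
    simpa using (tendsto_pow_atTop_nhds_zero_of_lt_one h0 h1).mul_const B
  obtain ⟨K, hK⟩ := Metric.tendsto_atTop.1 hpow (η / 2) (by positivity)
  refine ⟨N + K + 1, fun t ht => ?_⟩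
  have htN : N ≤ t := by omega
  have hsplit : ∑ ℓ ∈ Finset.range t, ρ ^ (t - 1 - ℓ) * ε ℓ =
      (∑ ℓ ∈ Finset.range N, ρ ^ (t - 1 - ℓ) * ε ℓ) +
        ∑ ℓ ∈ Finset.Ico N t, ρ ^ (t - 1 - ℓ) * ε ℓ := by
    simp only [Finset.range_eq_Ico]
    exact (Finset.sum_Ico_consecutive _ (Nat.zero_le N) htN).symm
  have hp1 : ∑ ℓ ∈ Finset.range N, ρ ^ (t - 1 - ℓ) * ε ℓ ≤ ρ ^ (t - N) * B := by
    rw [hBdef, Finset.mul_sum]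
    refine Finset.sum_le_sum fun ℓ hℓ => ?_
    have hℓN : ℓ < N := Finset.mem_range.mp hℓ
    have hle : ρ ^ (t - 1 - ℓ) ≤ ρ ^ (t - N) :=
      pow_le_pow_of_le_one h0 h1.le (by omega)
    exact mul_le_mul_of_nonneg_right hle (hε ℓ)
  have hp1' : ρ ^ (t - N) * B < η / 2 := by
    have h := hK (t - N) (by omega)
    rw [Real.dist_eq, sub_zero] at h
    calc ρ ^ (t - N) * B ≤ |ρ ^ (t - N) * B| := le_abs_self _
    _ < η / 2 := h
  have hgeom : ∑ ℓ ∈ Finset.range t, ρ ^ (t - 1 - ℓ) ≤ 1 / (1 - ρ) := by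
    rw [Finset.sum_range_reflect (fun k => ρ ^ k) t]
    rw [geom_sum_eq (by linarith : ρ ≠ 1) t]
    have heq : (ρ ^ t - 1) / (ρ - 1) = (1 - ρ ^ t) / (1 - ρ) := by
      rw [← neg_div_neg_eq]; ring_nf
    rw [heq]
    have hpt : 0 ≤ ρ ^ t := pow_nonneg h0 t
    exact div_le_div₀ zero_le_one (by linarith) h1ρ le_rfl
  have hp2 : ∑ ℓ ∈ Finset.Ico N t, ρ ^ (t - 1 - ℓ) * ε ℓ ≤ η / 2 := by
    calc ∑ ℓ ∈ Finset.Ico N t, ρ ^ (t - 1 - ℓ) * ε ℓ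
        ≤ ∑ ℓ ∈ Finset.Ico N t, ρ ^ (t - 1 - ℓ) * (η * (1 - ρ) / 2) := by
          refine Finset.sum_le_sum fun ℓ hℓ => ?_
          exact mul_le_mul_of_nonneg_left (hNε ℓ (Finset.mem_Ico.mp hℓ).1)
            (pow_nonneg h0 _)
      _ = (η * (1 - ρ) / 2) * ∑ ℓ ∈ Finset.Ico N t, ρ ^ (t - 1 - ℓ) := by
          rw [← Finset.sum_mul]; ring
      _ ≤ (η * (1 - ρ) / 2) * (1 / (1 - ρ)) := by
          refine mul_le_mul_of_nonneg_left ?_ (by positivity)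
          refine le_trans ?_ hgeom
          refine Finset.sum_le_sum_of_subset_of_nonneg ?_
            (fun _ _ _ => pow_nonneg h0 _)
          rw [Finset.range_eq_Ico]
          exact Finset.Ico_subset_Ico (Nat.zero_le N) le_rfl
      _ ≤ η / 2 := le_of_eq (by field_simp)
  have hnn : 0 ≤ ∑ ℓ ∈ Finset.range t, ρ ^ (t - 1 - ℓ) * ε ℓ :=
    Finset.sum_nonneg fun ℓ _ => mul_nonneg (pow_nonneg h0 _) (hε ℓ)
  rw [Real.dist_eq, sub_zero, abs_of_nonneg hnn, hsplit]
  linarith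

private lemma sgd_one_step {H : Type*} [NormedAddCommGroup H] [InnerProductSpace ℝ H]
    (f : H → ℝ) (f' : H → H) (fstar : ℝ) (hlb : ∀ x, fstar ≤ f x)
    (L μ : ℝ) (hμ : 0 < μ) (hμL : μ ≤ L)
    (hdescent : ∀ x y, f y ≤ f x + ⟪f' x, y - x⟫ + L / 2 * ‖y - x‖ ^ 2)
    (hdom : ∀ x, 2 * μ * (f x - fstar) ≤ ‖f' x‖ ^ 2)
    (α : ℝ) (hα : α ∈ Set.Ioc (0 : ℝ) (1 / (4 * L)))
    (z d : H) :
    f (z - α • (f' z + d)) - fstar ≤ (1 - α * μ / 2) * (f z - fstar) + α * ‖d‖ ^ 2 := by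
  obtain ⟨hα0, hα1⟩ := hα
  have hL : 0 < L := lt_of_lt_of_le hμ hμL
  have hLα : L * α ≤ 1 / 4 := by
    rw [le_div_iff₀ (by positivity)] at hα1
    linarith [hα1]
  have hd := hdescent z (z - α • (f' z + d))
  rw [sub_sub_cancel_left] at hd
  rw [inner_neg_right, real_inner_smul_right, inner_add_right,
    real_inner_self_eq_norm_sq, norm_neg, norm_smul, Real.norm_eq_abs,
    mul_pow, sq_abs] at hd
  set G := ‖f' z‖ with hG
  set D := ‖d‖ with hD
  have hCS : -⟪f' z, d⟫ ≤ G * D := by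
    have h := real_inner_le_norm (f' z) (-d)
    rw [inner_neg_right, norm_neg] at h
    exact h
  have hyoung : G * D ≤ (1/3) * G ^ 2 + (3/4) * D ^ 2 := by
    nlinarith [sq_nonneg (G - 3/2 * D)]
  have hsum : ‖f' z + d‖ ^ 2 ≤ 2 * G ^ 2 + 2 * D ^ 2 := by
    have h1 : ‖f' z + d‖ ≤ G + D := norm_add_le _ _
    nlinarith [norm_nonneg (f' z + d), sq_nonneg (G - D)]
  have hG0 : 0 ≤ G ^ 2 := sq_nonneg _
  have hD0 : 0 ≤ D ^ 2 := sq_nonneg _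
  have hdomz := hdom z
  have hlbz := hlb z
  have e1 : -(α * ⟪f' z, d⟫) ≤ α * ((1/3) * G ^ 2 + (3/4) * D ^ 2) := by
    have := mul_le_mul_of_nonneg_left (hCS.trans hyoung) hα0.le
    linarith [this]
  have e2 : L / 2 * (α ^ 2 * ‖f' z + d‖ ^ 2) ≤ (1/4) * (α * G ^ 2) + (1/4) * (α * D ^ 2) := by
    have h2 : L / 2 * (α ^ 2 * ‖f' z + d‖ ^ 2) ≤ L / 2 * (α ^ 2 * (2 * G ^ 2 + 2 * D ^ 2)) := by
      refine mul_le_mul_of_nonneg_left ?_ (by positivity)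
      exact mul_le_mul_of_nonneg_left hsum (by positivity)
    have h3 : L / 2 * (α ^ 2 * (2 * G ^ 2 + 2 * D ^ 2)) = (L * α) * (α * G ^ 2) + (L * α) * (α * D ^ 2) := by ring
    have h4 : (L * α) * (α * G ^ 2) ≤ (1/4) * (α * G ^ 2) :=
      mul_le_mul_of_nonneg_right hLα (by positivity)
    have h5 : (L * α) * (α * D ^ 2) ≤ (1/4) * (α * D ^ 2) :=
      mul_le_mul_of_nonneg_right hLα (by positivity)
    linarith
  have e3 : α * μ / 2 * (f z - fstar) ≤ (1/4) * (α * G ^ 2) := by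
    have := mul_le_mul_of_nonneg_left hdomz (by positivity : (0:ℝ) ≤ α / 4)
    linarith [this]
  linarith [hd, e1, e2, e3, mul_nonneg hα0.le hG0]

theorem sgd_biased_convergence
    {H : Type*} [NormedAddCommGroup H] [InnerProductSpace ℝ H]
    (f : H → ℝ) (f' : H → H)
    (hdiff : ∀ x, HasFDerivAt f (innerSL ℝ (f' x)) x)
    (fstar : ℝ) (hlb : ∀ x, fstar ≤ f x)
    (L μ : ℝ) (hμ : 0 < μ) (hμL : μ ≤ L)
    (hdescent : ∀ x y, f y ≤ f x + ⟪f' x, y - x⟫ + L / 2 * ‖y - x‖ ^ 2)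
    (hdom : ∀ x, 2 * μ * (f x - fstar) ≤ ‖f' x‖ ^ 2)
    {Ω : Type*} [MeasurableSpace Ω] (P : Measure Ω) [IsProbabilityMeasure P]
    (α : ℝ) (hα : α ∈ Set.Ioc (0 : ℝ) (1 / (4 * L)))
    (x₀ : H) (δ : ℕ → Ω → H) (ε : ℕ → ℝ)
    (hδmeas : ∀ t, AEStronglyMeasurable (δ t) P)
    (hδint : ∀ t, Integrable (fun ω => ‖δ t ω‖ ^ 2) P)
    (hδ : ∀ t, ∫ ω, ‖δ t ω‖ ^ 2 ∂P ≤ ε t)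
    (x : ℕ → Ω → H)
    (hx0 : ∀ ω, x 0 ω = x₀)
    (hxrec : ∀ t ω, x (t + 1) ω = x t ω - α • (f' (x t ω) + δ t ω))
    (hfint : ∀ t, Integrable (fun ω => f (x t ω)) P) :
    (∀ t : ℕ, 1 ≤ t →
        (∫ ω, f (x t ω) ∂P) - fstar ≤
          (1 - α * μ / 2) ^ t * (f x₀ - fstar) +
            α * ∑ ℓ ∈ Finset.range t, (1 - α * μ / 2) ^ (t - 1 - ℓ) * ε ℓ) ∧
    (Filter.Tendsto ε Filter.atTop (nhds 0) →
        Filter.Tendsto (fun t => (∫ ω, f (x t ω) ∂P) - fstar)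
          Filter.atTop (nhds 0)) := by
  obtain ⟨hα0, hα1⟩ := hα
  have hL : 0 < L := lt_of_lt_of_le hμ hμL
  have hLα : L * α ≤ 1 / 4 := by
    rw [le_div_iff₀ (by positivity)] at hα1
    linarith [hα1]
  have hμα : μ * α ≤ 1 / 4 :=
    le_trans (mul_le_mul_of_nonneg_right hμL hα0.le) hLα
  set ρ : ℝ := 1 - α * μ / 2 with hρdef
  have hρ0 : 0 ≤ ρ := by rw [hρdef]; nlinarith
  have hρ1 : ρ < 1 := by rw [hρdef]; nlinarith
  have hεnn : ∀ t, 0 ≤ ε t := fun t =>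
    le_trans (integral_nonneg fun ω => sq_nonneg _) (hδ t)
  have key := sgd_one_step f f' fstar hlb L μ hμ hμL hdescent hdom α ⟨hα0, hα1⟩
  -- expectation one step
  have hstep : ∀ t, (∫ ω, f (x (t+1) ω) ∂P) - fstar ≤
      ρ * ((∫ ω, f (x t ω) ∂P) - fstar) + α * ε t := by
    intro t
    have hpt : ∀ ω, f (x (t+1) ω) ≤
        fstar + ρ * (f (x t ω) - fstar) + α * ‖δ t ω‖ ^ 2 := by
      intro ω
      rw [hxrec t ω, hρdef]
      have := key (x t ω) (δ t ω)
      linarith [this]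
    have hisub : Integrable (fun ω => f (x t ω) - fstar) P :=
      (hfint t).sub (integrable_const fstar)
    have hi0 : Integrable (fun ω => ρ * (f (x t ω) - fstar)) P := hisub.const_mul ρ
    have hi1 : Integrable (fun ω => α * ‖δ t ω‖ ^ 2) P := (hδint t).const_mul α
    have hint1 : Integrable (fun ω => fstar + ρ * (f (x t ω) - fstar)) P :=
      (integrable_const fstar).add hi0
    have hint2 : Integrable (fun ω =>
        fstar + ρ * (f (x t ω) - fstar) + α * ‖δ t ω‖ ^ 2) P :=
      hint1.add hi1
    have hmono := integral_mono (hfint (t+1)) hint2 hpt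
    rw [integral_add hint1 hi1,
      integral_add (integrable_const fstar) hi0,
      integral_const, integral_const_mul, integral_const_mul,
      integral_sub (hfint t) (integrable_const fstar), integral_const] at hmono
    simp only [measure_univ, probReal_univ, ENNReal.toReal_one, smul_eq_mul, one_mul] at hmono
    have hδt := mul_le_mul_of_nonneg_left (hδ t) hα0.le
    linarith
  -- main inductive bound (for all t, including 0)
  have main : ∀ t, (∫ ω, f (x t ω) ∂P) - fstar ≤
      ρ ^ t * (f x₀ - fstar) +
        α * ∑ ℓ ∈ Finset.range t, ρ ^ (t - 1 - ℓ) * ε ℓ := by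
    intro t
    induction t with
    | zero =>
      simp only [Finset.range_zero, Finset.sum_empty, mul_zero, add_zero, pow_zero, one_mul]
      have : (∫ ω, f (x 0 ω) ∂P) = f x₀ := by
        simp only [hx0]
        simp [integral_const, measure_univ]
      rw [this]
    | succ t ih =>
      have h1 := hstep t
      have h2 := mul_le_mul_of_nonneg_left ih hρ0
      have hsum : ρ * ∑ ℓ ∈ Finset.range t, ρ ^ (t - 1 - ℓ) * ε ℓ =
          ∑ ℓ ∈ Finset.range t, ρ ^ (t - ℓ) * ε ℓ := by
        rw [Finset.mul_sum]
        refine Finset.sum_congr rfl fun ℓ hℓ => ?_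
        have hℓt : ℓ < t := Finset.mem_range.mp hℓ
        have he : t - ℓ = (t - 1 - ℓ) + 1 := by omega
        rw [he, pow_succ]
        ring
      have hnew : ∑ ℓ ∈ Finset.range (t+1), ρ ^ (t + 1 - 1 - ℓ) * ε ℓ =
          (∑ ℓ ∈ Finset.range t, ρ ^ (t - ℓ) * ε ℓ) + ε t := by
        rw [Finset.sum_range_succ]
        simp
      rw [hnew]
      have h3 : ρ * (ρ ^ t * (f x₀ - fstar) +
          α * ∑ ℓ ∈ Finset.range t, ρ ^ (t - 1 - ℓ) * ε ℓ) =
          ρ ^ (t+1) * (f x₀ - fstar) +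
            α * ∑ ℓ ∈ Finset.range t, ρ ^ (t - ℓ) * ε ℓ := by
        rw [mul_add, ← mul_assoc, ← mul_assoc, mul_comm ρ α, mul_assoc α ρ _, hsum]
        ring
      rw [h3] at h2
      have := le_trans h1 (by linarith : ρ * ((∫ ω, f (x t ω) ∂P) - fstar) + α * ε t ≤
        ρ ^ (t+1) * (f x₀ - fstar) +
          α * ((∑ ℓ ∈ Finset.range t, ρ ^ (t - ℓ) * ε ℓ) + ε t))
      linarith [this]
  have hEnn : ∀ t, 0 ≤ (∫ ω, f (x t ω) ∂P) - fstar := by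
    intro t
    have := integral_mono (integrable_const fstar) (hfint t) (fun ω => hlb (x t ω))
    simp only [integral_const, measure_univ, probReal_univ, ENNReal.toReal_one, one_smul] at this
    linarith
  constructor
  · intro t _
    exact main t
  · intro hεlim
    have t1 : Filter.Tendsto (fun t : ℕ => ρ ^ t * (f x₀ - fstar))
        Filter.atTop (nhds 0) := by
      simpa using (tendsto_pow_atTop_nhds_zero_of_lt_one hρ0 hρ1).mul_const (f x₀ - fstar)
    have t2 : Filter.Tendsto
        (fun t => α * ∑ ℓ ∈ Finset.range t, ρ ^ (t - 1 - ℓ) * ε ℓ)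
        Filter.atTop (nhds 0) := by
      simpa using (geom_conv_tendsto_aux hρ0 hρ1 hεnn hεlim).const_mul α
    have hupper : Filter.Tendsto (fun t => ρ ^ t * (f x₀ - fstar) +
        α * ∑ ℓ ∈ Finset.range t, ρ ^ (t - 1 - ℓ) * ε ℓ) Filter.atTop (nhds 0) := by
      simpa using t1.add t2
    exact tendsto_of_tendsto_of_tendsto_of_le_of_le tendsto_const_nhds hupper hEnn main
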